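/- arXiv:1809.07288 — 4 statements merged into one kernel-verified Lean document; each statement's English description precedes it below -/
import Mathlib

section
/- If a non-empty set-valued map X : ℝ ⇉ ℝⁿ is forward Lipschitz continuous at t with constant L > 0, then for every x ∈ X(t) the temporal tangent cone T^t_x X is non-empty; moreover, T^t_x X contains a vector of norm at most L. -/
open Filter Topology Metric Set Pointwise

/-- Temporal tangent cone of a set-valued map. -/
def temporalTangentCone {n : ℕ} (X : ℝ → Set (EuclideanSpace ℝ (Fin n)))
    (t : ℝ) (x : EuclideanSpace ℝ (Fin n)) : Set (EuclideanSpace ℝ (Fin n)) :=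
  {v | ∃ (xk : ℕ → EuclideanSpace ℝ (Fin n)) (δk : ℕ → ℝ),
    (∀ k, 0 < δk k) ∧ Tendsto δk atTop (𝓝 0) ∧ Tendsto xk atTop (𝓝 x) ∧
    (∀ k, xk k ∈ X (t + δk k)) ∧
    Tendsto (fun k => (δk k)⁻¹ • (xk k - x)) atTop (𝓝 v)}

/-- Forward Lipschitz continuity of `X` at time `t` with constant `L`. -/
def forwardLipschitzAt {n : ℕ} (X : ℝ → Set (EuclideanSpace ℝ (Fin n)))
    (t : ℝ) (L : ℝ) : Prop :=
  ∃ D > 0, ∀ δ, 0 ≤ δ → δ < D →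
    X t ⊆ X (t + δ) + (δ * L) • Metric.closedBall (0 : EuclideanSpace ℝ (Fin n)) 1

/-- if `X` is non-empty valued and forward Lipschitz at `t` with constant
`L > 0`, the temporal tangent cone at every `x ∈ X(t)` is non-empty and contains a
vector of norm at most `L`. -/
theorem temporalTangentCone_nonempty_of_forwardLipschitz {n : ℕ}
    (X : ℝ → Set (EuclideanSpace ℝ (Fin n))) (hne : ∀ s, (X s).Nonempty)
    (t L : ℝ) (hL : 0 < L) (hfl : forwardLipschitzAt X t L)
    (x : EuclideanSpace ℝ (Fin n)) (hx : x ∈ X t) :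
    (temporalTangentCone X t x).Nonempty ∧
      ∃ v ∈ temporalTangentCone X t x, ‖v‖ ≤ L := by

  obtain ⟨D, hD, hflD⟩ := hfl
  set δ : ℕ → ℝ := fun k => D / (2 * (k + 1)) with hδdef
  have hδpos : ∀ k, 0 < δ k := fun k => by positivity
  have hδlt : ∀ k, δ k < D := by
    intro k
    have h1 : (1:ℝ) < 2 * ((k:ℝ) + 1) := by
      have : (0:ℝ) ≤ (k:ℝ) := Nat.cast_nonneg k
      nlinarith
    exact div_lt_self hD h1
  have hδ0 : Tendsto δ atTop (𝓝 0) := by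
    have h := tendsto_one_div_add_atTop_nhds_zero_nat.const_mul (D / 2)
    rw [mul_zero] at h
    convert h using 2 with k
    simp only [hδdef, mul_inv, div_eq_mul_inv, one_mul]; ring
  have key : ∀ k, ∃ a, a ∈ X (t + δ k) ∧ ‖a - x‖ ≤ δ k * L := by
    intro k
    have := hflD (δ k) (hδpos k).le (hδlt k) hx
    rw [Set.mem_add] at this
    obtain ⟨a, ha, b, hb, hab⟩ := this
    rw [Set.mem_smul_set] at hb
    obtain ⟨y, hy, hyb⟩ := hb
    refine ⟨a, ha, ?_⟩
    have hxa : a - x = -b := by rw [← hab]; abel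
    rw [hxa, norm_neg, ← hyb, norm_smul]
    have hy1 : ‖y‖ ≤ 1 := by simpa using hy
    have h0 : 0 ≤ δ k * L := mul_nonneg (hδpos k).le hL.le
    calc |δ k * L| * ‖y‖ ≤ (δ k * L) * 1 := by
          rw [abs_of_nonneg h0]
          exact mul_le_mul_of_nonneg_left hy1 h0
      _ = δ k * L := mul_one _
  choose xk hxk hxknorm using key
  set vk : ℕ → EuclideanSpace ℝ (Fin n) := fun k => (δ k)⁻¹ • (xk k - x) with hvk
  have hvknorm : ∀ k, vk k ∈ Metric.closedBall (0 : EuclideanSpace ℝ (Fin n)) L := by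
    intro k
    rw [Metric.mem_closedBall, dist_zero_right, hvk, norm_smul,
      norm_inv, Real.norm_eq_abs, abs_of_pos (hδpos k)]
    rw [inv_mul_le_iff₀ (hδpos k)]
    exact hxknorm k
  obtain ⟨v, hvball, φ, hφ, hφtend⟩ :=
    (isCompact_closedBall (0 : EuclideanSpace ℝ (Fin n)) L).tendsto_subseq hvknorm
  have hmem : v ∈ temporalTangentCone X t x := by
    refine ⟨xk ∘ φ, δ ∘ φ, fun k => hδpos (φ k), hδ0.comp hφ.tendsto_atTop, ?_,
      fun k => hxk (φ k), hφtend⟩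
    have hb : Tendsto (fun k => δ (φ k) * L) atTop (𝓝 0) := by
      have := (hδ0.comp hφ.tendsto_atTop).mul_const L
      simpa using this
    have : Tendsto (fun k => ‖xk (φ k) - x‖) atTop (𝓝 0) :=
      squeeze_zero (fun k => norm_nonneg _) (fun k => hxknorm (φ k)) hb
    rw [tendsto_iff_norm_sub_tendsto_zero]
    exact this
  have hvL : ‖v‖ ≤ L := by simpa using hvball
  exact ⟨⟨v, hmem⟩, v, hmem, hvL⟩
end

section
/- Conversely, let X : ℝ ⇉ ℝⁿ, t₀ ∈ ℝ, x ∈ X(t₀). If (v, 1) belongs to the Bouligand tangent cone of the set G := { (x', t) | t ≥ t₀, x' ∈ X(t) } at (x, t₀), witnessed by sequences (x_k, t_k) ∈ G with t_k > t₀ for all k, then v ∈ T^{t₀}_x X. -/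
open Filter Topology Metric Set

/-- if `(v,1)` is a Bouligand tangent vector of the graph
`G = {(x', t) | t ≥ t₀, x' ∈ X(t)}` at `(x, t₀)`, witnessed by a sequence with strictly
increasing time components, then `v ∈ T^{t₀}_x X`. -/
theorem graph_tangent_mem_temporal_tangent {n : ℕ}
    (X : ℝ → Set (EuclideanSpace ℝ (Fin n))) (t₀ : ℝ)
    (x : EuclideanSpace ℝ (Fin n)) (hx : x ∈ X t₀)
    (v : EuclideanSpace ℝ (Fin n))
    (pk : ℕ → EuclideanSpace ℝ (Fin n) × ℝ) (dk : ℕ → ℝ)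
    (hG : ∀ k, t₀ ≤ (pk k).2 ∧ (pk k).1 ∈ X (pk k).2)
    (ht : ∀ k, t₀ < (pk k).2)
    (hd : ∀ k, 0 < dk k) (hd0 : Tendsto dk atTop (𝓝 0))
    (hp : Tendsto pk atTop (𝓝 (x, t₀)))
    (hlim : Tendsto (fun k => (dk k)⁻¹ • (pk k - (x, t₀))) atTop (𝓝 (v, (1 : ℝ)))) :
    v ∈ temporalTangentCone X t₀ x := by
  set δk : ℕ → ℝ := fun k => (pk k).2 - t₀ with hδ
  have hδpos : ∀ k, 0 < δk k := fun k => sub_pos.2 (ht k)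
  have hfst : Tendsto (fun k => (pk k).1) atTop (𝓝 x) :=
    (continuous_fst.tendsto _).comp hp
  have hsnd : Tendsto (fun k => (pk k).2) atTop (𝓝 t₀) :=
    (continuous_snd.tendsto _).comp hp
  have hδ0 : Tendsto δk atTop (𝓝 0) := by
    have h := hsnd.sub (tendsto_const_nhds (x := t₀))
    simpa [hδ] using h
  have hA : Tendsto (fun k => (dk k)⁻¹ • ((pk k).1 - x)) atTop (𝓝 v) :=
    (continuous_fst.tendsto _).comp hlim
  have hB : Tendsto (fun k => (dk k)⁻¹ * δk k) atTop (𝓝 1) :=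
    (continuous_snd.tendsto _).comp hlim
  refine ⟨fun k => (pk k).1, δk, hδpos, hδ0, hfst, fun k => ?_, ?_⟩
  · have : t₀ + δk k = (pk k).2 := by ring
    rw [this]; exact (hG k).2
  · have key : ∀ k, (δk k)⁻¹ • ((pk k).1 - x)
        = ((dk k)⁻¹ * δk k)⁻¹ • ((dk k)⁻¹ • ((pk k).1 - x)) := by
      intro k
      rw [smul_smul]
      congr 1
      field_simp
      rw [mul_comm, ← div_div, div_self (hd k).ne']
    simp only [key]
    have := (hB.inv₀ one_ne_zero).smul hA
    simpa using this
end

section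
/- Let X(t) := { x ∈ ℝⁿ | g(x, t) ≤ 0 } (componentwise) where g : ℝⁿ × ℝ → ℝᵐ is continuously differentiable. Fix t and x ∈ X(t), and let I := { i | g_i(x,t) = 0 } be the active index set. Then every temporal tangent vector v ∈ T^t_x X satisfies ∇_x g_i(x,t)·v + ∂_t g_i(x,t) ≤ 0 for all i ∈ I. -/
open Filter Topology Metric Set

/-- every temporal tangent vector of `X(t) = {x | g(x,t) ≤ 0}` satisfies
`∇_x g_i(x,t)·v + ∂_t g_i(x,t) ≤ 0` for all active indices `i`. -/
theorem temporalTangentCone_subset_linearized {n m : ℕ}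
    (g : EuclideanSpace ℝ (Fin n) × ℝ → Fin m → ℝ) (hg : ContDiff ℝ 1 g)
    (t : ℝ) (x : EuclideanSpace ℝ (Fin n))
    (hx : ∀ i, g (x, t) i ≤ 0)
    (v : EuclideanSpace ℝ (Fin n))
    (hv : v ∈ temporalTangentCone
      (fun s => {y : EuclideanSpace ℝ (Fin n) | ∀ i, g (y, s) i ≤ 0}) t x) :
    ∀ i : Fin m, g (x, t) i = 0 →
      fderiv ℝ (fun p => g p i) (x, t) (v, (1 : ℝ)) ≤ 0 := by

  obtain ⟨xk, δk, hδpos, hδ0, hxk, hmem, hslope⟩ := hv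
  intro i hi
  set f : EuclideanSpace ℝ (Fin n) × ℝ → ℝ := fun p => g p i with hfdef
  have hgi : ContDiff ℝ 1 f :=
    (ContinuousLinearMap.proj i : ((Fin m → ℝ)) →L[ℝ] ℝ).contDiff.comp hg
  have hdf : HasFDerivAt f (fderiv ℝ f (x, t)) (x, t) :=
    (hgi.differentiable one_ne_zero (x, t)).hasFDerivAt
  set F := fderiv ℝ f (x, t) with hF
  set p0 : EuclideanSpace ℝ (Fin n) × ℝ := (x, t) with hp0
  set pk : ℕ → EuclideanSpace ℝ (Fin n) × ℝ := fun k => (xk k, t + δk k) with hpkdef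
  have hpk : Tendsto pk atTop (𝓝 p0) := by
    refine hxk.prodMk_nhds ?_
    simpa using tendsto_const_nhds.add hδ0
  set wk : ℕ → EuclideanSpace ℝ (Fin n) × ℝ :=
    fun k => ((δk k)⁻¹ • (xk k - x), (1 : ℝ)) with hwkdef
  have hwkeq : ∀ k, (δk k)⁻¹ • (pk k - p0) = wk k := by
    intro k
    have h1 : (δk k)⁻¹ * δk k = 1 := inv_mul_cancel₀ (hδpos k).ne'
    simp [pk, p0, wk, Prod.smul_def, Prod.sub_def, smul_eq_mul, add_sub_cancel_left, h1]
  have hwk : Tendsto wk atTop (𝓝 (v, 1)) := hslope.prodMk_nhds tendsto_const_nhds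
  have ho := hdf.isLittleO.comp_tendsto hpk
  have hM : ∀ᶠ k in atTop, ‖wk k‖ ≤ ‖((v, (1 : ℝ)) : EuclideanSpace ℝ (Fin n) × ℝ)‖ + 1 := by
    have := hwk.norm
    exact this.eventually_le_const (lt_add_one _)
  have hO : (fun k => pk k - p0) =O[atTop] δk := by
    rw [Asymptotics.isBigO_iff]
    refine ⟨‖((v, (1 : ℝ)) : EuclideanSpace ℝ (Fin n) × ℝ)‖ + 1, ?_⟩
    filter_upwards [hM] with k hk
    have hsm : pk k - p0 = δk k • wk k := by
      rw [← hwkeq k, smul_smul, mul_inv_cancel₀ (hδpos k).ne', one_smul]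
    rw [hsm, norm_smul, Real.norm_eq_abs]
    have h0 : (0 : ℝ) ≤ |δk k| := abs_nonneg _
    calc |δk k| * ‖wk k‖ ≤ |δk k| * (‖((v, (1 : ℝ)) : EuclideanSpace ℝ (Fin n) × ℝ)‖ + 1) :=
          mul_le_mul_of_nonneg_left hk h0
      _ = (‖((v, (1 : ℝ)) : EuclideanSpace ℝ (Fin n) × ℝ)‖ + 1) * |δk k| := mul_comm _ _
  have he : (fun k => f (pk k) - f p0 - F (pk k - p0)) =o[atTop] δk := ho.trans_isBigO hO
  have hdiv : Tendsto (fun k => (f (pk k) - f p0 - F (pk k - p0)) / δk k) atTop (𝓝 0) :=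
    he.tendsto_div_nhds_zero
  have hneg : Tendsto (fun k => -((f (pk k) - f p0 - F (pk k - p0)) / δk k)) atTop (𝓝 0) := by
    simpa using hdiv.neg
  have hFw : Tendsto (fun k => F (wk k)) atTop (𝓝 (F (v, 1))) :=
    (F.continuous.tendsto _).comp hwk
  have key : ∀ k, F (wk k) ≤ -((f (pk k) - f p0 - F (pk k - p0)) / δk k) := by
    intro k
    have h1 : f (pk k) ≤ 0 := hmem k i
    have h2 : f p0 = 0 := hi
    have h3 : 0 < δk k := hδpos k
    rw [← hwkeq k, map_smul, h2]
    have h4 : 0 < (δk k)⁻¹ := inv_pos.2 h3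
    rw [smul_eq_mul]
    have heq : -((f (pk k) - 0 - F (pk k - p0)) / δk k)
        = (F (pk k - p0) - f (pk k)) * (δk k)⁻¹ := by
      field_simp
      ring
    rw [heq]
    nlinarith [mul_nonneg (neg_nonneg.2 h1) h4.le]
  exact le_of_tendsto_of_tendsto' hFw hneg key
end

section
/- Let X : ℝ ⇉ ℝⁿ be non-empty-valued and forward Lipschitz continuous at every s in an interval [t, t+T] with uniform constant L (i.e., for each s ∈ [t, t+T) there is D_s > 0 with X(s) ⊆ X(s+δ) + δL𝔹 for all δ ∈ [0, D_s)). Assume additionally that the graph of X is closed. Then X(t) ⊆ X(t+T) + T·L·𝔹. -/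
open Filter Topology Metric Set Pointwise

lemma mem_add_ball_iff {n : ℕ} (S : Set (EuclideanSpace ℝ (Fin n)))
    (x : EuclideanSpace ℝ (Fin n)) {r : ℝ} (hr : 0 ≤ r) :
    x ∈ S + r • Metric.closedBall (0 : EuclideanSpace ℝ (Fin n)) 1 ↔
      ∃ y ∈ S, dist x y ≤ r := by
  rw [smul_unitClosedBall_of_nonneg hr]
  constructor
  · rintro ⟨y, hy, z, hz, rfl⟩
    refine ⟨y, hy, ?_⟩
    rw [mem_closedBall_zero_iff] at hz
    simpa [dist_eq_norm] using hz
  · rintro ⟨y, hy, hxy⟩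
    exact ⟨y, hy, x - y, by simpa [mem_closedBall_zero_iff, ← dist_eq_norm], by abel_nf⟩

/-- the local forward Lipschitz inclusion, holding at every point of an
interval with uniform constant `L`, propagates over the whole interval (given a closed
graph): `X(t) ⊆ X(t+T) + T·L·𝔹`. -/
theorem forwardLipschitz_propagate {n : ℕ}
    (X : ℝ → Set (EuclideanSpace ℝ (Fin n))) (hne : ∀ s, (X s).Nonempty)
    (t T L : ℝ) (hT : 0 < T) (hL : 0 < L)
    (hgraph : IsClosed {p : EuclideanSpace ℝ (Fin n) × ℝ | p.1 ∈ X p.2})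
    (hfl : ∀ s ∈ Set.Ico t (t + T), ∃ D > 0, ∀ δ, 0 ≤ δ → δ < D →
      X s ⊆ X (s + δ) + (δ * L) • Metric.closedBall (0 : EuclideanSpace ℝ (Fin n)) 1) :
    X t ⊆ X (t + T) + (T * L) • Metric.closedBall (0 : EuclideanSpace ℝ (Fin n)) 1 := by
  intro x hx
  set A : Set ℝ := {s | s ∈ Set.Icc t (t + T) ∧ ∃ y ∈ X s, dist x y ≤ (s - t) * L} with hA
  have htA : t ∈ A := ⟨⟨le_refl t, by linarith⟩, x, hx, by simp⟩
  have hAne : A.Nonempty := ⟨t, htA⟩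
  have hAbdd : BddAbove A := ⟨t + T, fun s hs => hs.1.2⟩
  set c := sSup A with hc
  have hct : t ≤ c := le_csSup hAbdd htA
  have hcT : c ≤ t + T := csSup_le hAne fun s hs => hs.1.2
  -- c ∈ A via sequences plus compactness and closed graph
  have hcA : c ∈ A := by
    obtain ⟨u, hmono, hulim, huA⟩ := exists_seq_tendsto_sSup hAne hAbdd
    choose y hyX hyd using fun k => (huA k).2
    have hyball : ∀ k, y k ∈ Metric.closedBall x (T * L) := by
      intro k
      rw [Metric.mem_closedBall, dist_comm]
      refine le_trans (hyd k) ?_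
      have := (huA k).1.2
      have := (huA k).1.1
      nlinarith
    obtain ⟨z, hz, φ, hφ, hzlim⟩ :=
      (isCompact_closedBall x (T * L)).tendsto_subseq hyball
    have hulim' : Tendsto (u ∘ φ) atTop (𝓝 c) := hulim.comp hφ.tendsto_atTop
    have hzX : z ∈ X c := by
      have : Tendsto (fun k => (y (φ k), u (φ k))) atTop (𝓝 (z, c)) :=
        hzlim.prodMk_nhds hulim'
      exact hgraph.mem_of_tendsto this (Eventually.of_forall fun k => hyX (φ k))
    refine ⟨⟨hct, hcT⟩, z, hzX, ?_⟩
    have h1 : Tendsto (fun k => dist x (y (φ k))) atTop (𝓝 (dist x z)) :=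
      (Continuous.tendsto (continuous_const.dist continuous_id) z).comp hzlim
    have h2 : Tendsto (fun k => (u (φ k) - t) * L) atTop (𝓝 ((c - t) * L)) :=
      ((hulim'.sub tendsto_const_nhds).mul tendsto_const_nhds)
    exact le_of_tendsto_of_tendsto h1 h2 (Eventually.of_forall fun k => hyd (φ k))
  -- c = t + T
  have hceq : c = t + T := by
    by_contra hne'
    have hclt : c < t + T := lt_of_le_of_ne hcT hne'
    obtain ⟨D, hD, hincl⟩ := hfl c ⟨hct, hclt⟩
    set δ := min (D / 2) (t + T - c) with hδ
    have hδ0 : 0 < δ := lt_min (by linarith) (by linarith)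
    have hδD : δ < D := lt_of_le_of_lt (min_le_left _ _) (by linarith)
    obtain ⟨_, yy, hyyX, hyyd⟩ := hcA
    have := hincl δ hδ0.le hδD hyyX
    rw [mem_add_ball_iff _ _ (by positivity)] at this
    obtain ⟨zz, hzzX, hzzd⟩ := this
    have hmem : c + δ ∈ A := by
      refine ⟨⟨by linarith, by
        have := min_le_right (D / 2) (t + T - c); linarith⟩, zz, hzzX, ?_⟩
      calc dist x zz ≤ dist x yy + dist yy zz := dist_triangle _ _ _
        _ ≤ (c - t) * L + δ * L := add_le_add hyyd hzzd
        _ = (c + δ - t) * L := by ring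
    have := le_csSup hAbdd hmem
    linarith
  obtain ⟨_, z, hzX, hzd⟩ := hcA
  rw [hceq] at hzX hzd
  rw [mem_add_ball_iff _ _ (by positivity)]
  exact ⟨z, hzX, by simpa using hzd⟩
end
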